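/- arXiv:0905.1370 — 2 statements merged into one kernel-verified Lean document; each statement's English description precedes it below -/
import Mathlib

section
/- Let (V₀, ω₀), (V₁, ω₁), (V₂, ω₂) be symplectic vector spaces, Λ₀₁ ⊆ V₀ × V₁ a Lagrangian subspace for (−ω₀) ⊕ ω₁, and Λ₁₂ ⊆ V₁ × V₂ a Lagrangian subspace for (−ω₁) ⊕ ω₂. Then the dimension of the kernel of π₀₂ restricted to the fiber product Λ₀₁ ×_{V₁} Λ₁₂ equals the codimension of (Λ₀₁ × Λ₁₂) + K in V₀ × V₁ × V₁ × V₂, i.e. dim ker(π₀₂|_{Λ₀₁ ×_{V₁} Λ₁₂}) = dim(V₀ × V₁ × V₁ × V₂) − dim((Λ₀₁ × Λ₁₂) + K). -/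
open LinearMap Submodule

/-- The symplectic complement of a subspace `W` with respect to a bilinear form `ω`. -/
def symplComp {V : Type*} [AddCommGroup V] [Module ℝ V]
    (ω : V →ₗ[ℝ] V →ₗ[ℝ] ℝ) (W : Submodule ℝ V) : Submodule ℝ V where
  carrier := {v | ∀ w ∈ W, ω v w = 0}
  zero_mem' := by intro w _; simp
  add_mem' := by intro a b ha hb w hw; simp [ha w hw, hb w hw]
  smul_mem' := by intro c a ha w hw; simp [ha w hw]

/-- `ω` is a (linear) symplectic form: alternating and nondegenerate. -/
structure IsSymplecticForm {V : Type*} [AddCommGroup V] [Module ℝ V]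
    (ω : V →ₗ[ℝ] V →ₗ[ℝ] ℝ) : Prop where
  alternating : ∀ v, ω v v = 0
  nondeg : ∀ v, (∀ w, ω v w = 0) → v = 0

/-- A subspace is Lagrangian iff it equals its symplectic complement. -/
def IsLagrangian {V : Type*} [AddCommGroup V] [Module ℝ V]
    (ω : V →ₗ[ℝ] V →ₗ[ℝ] ℝ) (Λ : Submodule ℝ V) : Prop :=
  Λ = symplComp ω Λ

/-- The symplectic form `(−ω₀) ⊕ ω₁` on `V₀ × V₁`. -/
def prodFormNegPos {V₀ V₁ : Type*} [AddCommGroup V₀] [Module ℝ V₀]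
    [AddCommGroup V₁] [Module ℝ V₁]
    (ω₀ : V₀ →ₗ[ℝ] V₀ →ₗ[ℝ] ℝ) (ω₁ : V₁ →ₗ[ℝ] V₁ →ₗ[ℝ] ℝ) :
    (V₀ × V₁) →ₗ[ℝ] (V₀ × V₁) →ₗ[ℝ] ℝ :=
  LinearMap.mk₂ ℝ (fun x y => - ω₀ x.1 y.1 + ω₁ x.2 y.2)
    (by intro x x' y
        simp only [Prod.fst_add, Prod.snd_add, map_add, LinearMap.add_apply]; ring)
    (by intro c x y
        simp only [Prod.smul_fst, Prod.smul_snd, map_smul, LinearMap.smul_apply,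
          smul_eq_mul]; ring)
    (by intro x y y'
        simp only [Prod.fst_add, Prod.snd_add, map_add, LinearMap.add_apply]; ring)
    (by intro c x y
        simp only [Prod.smul_fst, Prod.smul_snd, map_smul, LinearMap.smul_apply,
          smul_eq_mul]; ring)

/-- The symplectic form `ω₀₁₁₂ = (−ω₀) ⊕ ω₁ ⊕ (−ω₁) ⊕ ω₂` on `(V₀ × V₁) × (V₁ × V₂)`. -/
def form0112 {V₀ V₁ V₂ : Type*} [AddCommGroup V₀] [Module ℝ V₀]
    [AddCommGroup V₁] [Module ℝ V₁] [AddCommGroup V₂] [Module ℝ V₂]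
    (ω₀ : V₀ →ₗ[ℝ] V₀ →ₗ[ℝ] ℝ) (ω₁ : V₁ →ₗ[ℝ] V₁ →ₗ[ℝ] ℝ)
    (ω₂ : V₂ →ₗ[ℝ] V₂ →ₗ[ℝ] ℝ) :
    ((V₀ × V₁) × (V₁ × V₂)) →ₗ[ℝ] ((V₀ × V₁) × (V₁ × V₂)) →ₗ[ℝ] ℝ :=
  LinearMap.mk₂ ℝ
    (fun x y => - ω₀ x.1.1 y.1.1 + ω₁ x.1.2 y.1.2 - ω₁ x.2.1 y.2.1 + ω₂ x.2.2 y.2.2)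
    (by intro x x' y
        simp only [Prod.fst_add, Prod.snd_add, map_add, LinearMap.add_apply]; ring)
    (by intro c x y
        simp only [Prod.smul_fst, Prod.smul_snd, map_smul, LinearMap.smul_apply,
          smul_eq_mul]; ring)
    (by intro x y y'
        simp only [Prod.fst_add, Prod.snd_add, map_add, LinearMap.add_apply]; ring)
    (by intro c x y
        simp only [Prod.smul_fst, Prod.smul_snd, map_smul, LinearMap.smul_apply,
          smul_eq_mul]; ring)

/-- `K = V₀ × Δ₁ × V₂`, the product of the full spaces with the diagonal of `V₁`. -/
def Kdiag {V₀ V₁ V₂ : Type*} [AddCommGroup V₀] [Module ℝ V₀]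
    [AddCommGroup V₁] [Module ℝ V₁] [AddCommGroup V₂] [Module ℝ V₂] :
    Submodule ℝ ((V₀ × V₁) × (V₁ × V₂)) where
  carrier := {x | x.1.2 = x.2.1}
  zero_mem' := rfl
  add_mem' := by
    intro a b ha hb
    simp only [Set.mem_setOf_eq] at ha hb ⊢
    show a.1.2 + b.1.2 = a.2.1 + b.2.1
    rw [ha, hb]
  smul_mem' := by
    intro c a ha
    simp only [Set.mem_setOf_eq] at ha ⊢
    show c • a.1.2 = c • a.2.1
    rw [ha]

/-- The projection `π₀₂ : V₀ × V₁ × V₁ × V₂ → V₀ × V₂` onto the outer factors. -/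
def proj02 {V₀ V₁ V₂ : Type*} [AddCommGroup V₀] [Module ℝ V₀]
    [AddCommGroup V₁] [Module ℝ V₁] [AddCommGroup V₂] [Module ℝ V₂] :
    ((V₀ × V₁) × (V₁ × V₂)) →ₗ[ℝ] V₀ × V₂ where
  toFun x := (x.1.1, x.2.2)
  map_add' _ _ := rfl
  map_smul' _ _ := rfl



section Aux

variable {V : Type*} [AddCommGroup V] [Module ℝ V]

lemma mem_symplComp {ω : V →ₗ[ℝ] V →ₗ[ℝ] ℝ} {W : Submodule ℝ V} {v : V} :
    v ∈ symplComp ω W ↔ ∀ w ∈ W, ω v w = 0 := Iff.rfl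

lemma symplComp_sup (ω : V →ₗ[ℝ] V →ₗ[ℝ] ℝ) (W W' : Submodule ℝ V) :
    symplComp ω (W ⊔ W') = symplComp ω W ⊓ symplComp ω W' := by
  ext v
  simp only [Submodule.mem_inf, mem_symplComp]
  constructor
  · intro h
    exact ⟨fun w hw => h w (Submodule.mem_sup_left hw),
      fun w hw => h w (Submodule.mem_sup_right hw)⟩
  · rintro ⟨h1, h2⟩ w hw
    obtain ⟨a, ha, b, hb, rfl⟩ := Submodule.mem_sup.mp hw
    rw [map_add, h1 a ha, h2 b hb, add_zero]

lemma finrank_symplComp [FiniteDimensional ℝ V] (ω : V →ₗ[ℝ] V →ₗ[ℝ] ℝ)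
    (hω : IsSymplecticForm ω) (W : Submodule ℝ V) :
    Module.finrank ℝ (symplComp ω W) + Module.finrank ℝ W = Module.finrank ℝ V := by
  have hinj : Function.Injective ω := by
    rw [← LinearMap.ker_eq_bot, Submodule.eq_bot_iff]
    intro v hv
    exact hω.nondeg v (fun w => by
      have : ω v = 0 := hv
      rw [this]; rfl)
  have hsurj : Function.Surjective ω :=
    (LinearMap.injective_iff_surjective_of_finrank_eq_finrank
      (Subspace.dual_finrank_eq).symm).mp hinj
  let e : V ≃ₗ[ℝ] Module.Dual ℝ V := LinearEquiv.ofBijective ω ⟨hinj, hsurj⟩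
  have hcomp : symplComp ω W = Submodule.comap (e : V →ₗ[ℝ] Module.Dual ℝ V)
      W.dualAnnihilator := by
    ext v
    simp only [mem_symplComp, Submodule.mem_comap, Submodule.mem_dualAnnihilator]
    rfl
  rw [hcomp, Submodule.comap_equiv_eq_map_symm, LinearEquiv.finrank_map_eq]
  have h1 : Module.finrank ℝ (V ⧸ W) = Module.finrank ℝ W.dualAnnihilator :=
    (Subspace.quotEquivAnnihilator W).finrank_eq
  have h2 := Submodule.finrank_quotient_add_finrank W
  omega

end Aux

section Aux2

variable {V₀ V₁ V₂ : Type*} [AddCommGroup V₀] [Module ℝ V₀]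
    [AddCommGroup V₁] [Module ℝ V₁] [AddCommGroup V₂] [Module ℝ V₂]

lemma form0112_apply (ω₀ : V₀ →ₗ[ℝ] V₀ →ₗ[ℝ] ℝ) (ω₁ : V₁ →ₗ[ℝ] V₁ →ₗ[ℝ] ℝ)
    (ω₂ : V₂ →ₗ[ℝ] V₂ →ₗ[ℝ] ℝ) (x y : (V₀ × V₁) × (V₁ × V₂)) :
    form0112 ω₀ ω₁ ω₂ x y
      = prodFormNegPos ω₀ ω₁ x.1 y.1 + prodFormNegPos ω₁ ω₂ x.2 y.2 := by
  show - ω₀ x.1.1 y.1.1 + ω₁ x.1.2 y.1.2 - ω₁ x.2.1 y.2.1 + ω₂ x.2.2 y.2.2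
    = (- ω₀ x.1.1 y.1.1 + ω₁ x.1.2 y.1.2) + (- ω₁ x.2.1 y.2.1 + ω₂ x.2.2 y.2.2)
  ring

lemma isSymplectic_form0112 {ω₀ : V₀ →ₗ[ℝ] V₀ →ₗ[ℝ] ℝ} {ω₁ : V₁ →ₗ[ℝ] V₁ →ₗ[ℝ] ℝ}
    {ω₂ : V₂ →ₗ[ℝ] V₂ →ₗ[ℝ] ℝ}
    (hω₀ : IsSymplecticForm ω₀) (hω₁ : IsSymplecticForm ω₁) (hω₂ : IsSymplecticForm ω₂) :
    IsSymplecticForm (form0112 ω₀ ω₁ ω₂) := by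
  constructor
  · intro v
    show - ω₀ v.1.1 v.1.1 + ω₁ v.1.2 v.1.2 - ω₁ v.2.1 v.2.1 + ω₂ v.2.2 v.2.2 = 0
    rw [hω₀.alternating, hω₁.alternating, hω₁.alternating, hω₂.alternating]; ring
  · intro v hv
    have h0 : v.1.1 = 0 := by
      apply hω₀.nondeg
      intro w
      have := hv ((w, 0), (0, 0))
      simp only [form0112, LinearMap.mk₂_apply, map_zero, LinearMap.zero_apply] at this
      linarith
    have h3 : v.2.2 = 0 := by
      apply hω₂.nondeg
      intro w
      have := hv ((0, 0), (0, w))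
      simp only [form0112, LinearMap.mk₂_apply, map_zero, LinearMap.zero_apply] at this
      linarith
    have h1 : v.1.2 = 0 := by
      apply hω₁.nondeg
      intro w
      have := hv ((0, w), (0, 0))
      simp only [form0112, LinearMap.mk₂_apply, map_zero, LinearMap.zero_apply] at this
      linarith
    have h2 : v.2.1 = 0 := by
      apply hω₁.nondeg
      intro w
      have := hv ((0, 0), (w, 0))
      simp only [form0112, LinearMap.mk₂_apply, map_zero, LinearMap.zero_apply] at this
      linarith
    exact Prod.ext (Prod.ext h0 h1) (Prod.ext h2 h3)

lemma lagrangian_prod {ω₀ : V₀ →ₗ[ℝ] V₀ →ₗ[ℝ] ℝ} {ω₁ : V₁ →ₗ[ℝ] V₁ →ₗ[ℝ] ℝ}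
    {ω₂ : V₂ →ₗ[ℝ] V₂ →ₗ[ℝ] ℝ}
    {Λ₀₁ : Submodule ℝ (V₀ × V₁)} {Λ₁₂ : Submodule ℝ (V₁ × V₂)}
    (hΛ₀₁ : IsLagrangian (prodFormNegPos ω₀ ω₁) Λ₀₁)
    (hΛ₁₂ : IsLagrangian (prodFormNegPos ω₁ ω₂) Λ₁₂) :
    symplComp (form0112 ω₀ ω₁ ω₂) (Λ₀₁.prod Λ₁₂) = Λ₀₁.prod Λ₁₂ := by
  ext v
  simp only [mem_symplComp, Submodule.mem_prod]
  constructor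
  · intro h
    constructor
    · rw [hΛ₀₁]
      intro w hw
      have := h (w, 0) ⟨hw, Submodule.zero_mem _⟩
      rw [form0112_apply] at this
      simpa using this
    · rw [hΛ₁₂]
      intro w hw
      have := h (0, w) ⟨Submodule.zero_mem _, hw⟩
      rw [form0112_apply] at this
      simpa using this
  · rintro ⟨h1, h2⟩ w ⟨hw1, hw2⟩
    rw [form0112_apply]
    have e1 : prodFormNegPos ω₀ ω₁ v.1 w.1 = 0 := by
      have := hΛ₀₁ ▸ h1
      exact this w.1 hw1
    have e2 : prodFormNegPos ω₁ ω₂ v.2 w.2 = 0 := by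
      have := hΛ₁₂ ▸ h2
      exact this w.2 hw2
    rw [e1, e2, add_zero]

lemma symplComp_Kdiag {ω₀ : V₀ →ₗ[ℝ] V₀ →ₗ[ℝ] ℝ} {ω₁ : V₁ →ₗ[ℝ] V₁ →ₗ[ℝ] ℝ}
    {ω₂ : V₂ →ₗ[ℝ] V₂ →ₗ[ℝ] ℝ}
    (hω₀ : IsSymplecticForm ω₀) (hω₁ : IsSymplecticForm ω₁) (hω₂ : IsSymplecticForm ω₂) :
    symplComp (form0112 ω₀ ω₁ ω₂) Kdiag = Kdiag ⊓ LinearMap.ker proj02 := by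
  ext v
  simp only [mem_symplComp, Submodule.mem_inf, LinearMap.mem_ker]
  constructor
  · intro h
    have h0 : v.1.1 = 0 := by
      apply hω₀.nondeg
      intro w
      have := h ((w, 0), (0, 0)) rfl
      simp only [form0112, LinearMap.mk₂_apply, map_zero, LinearMap.zero_apply] at this
      linarith
    have h3 : v.2.2 = 0 := by
      apply hω₂.nondeg
      intro w
      have := h ((0, 0), (0, w)) rfl
      simp only [form0112, LinearMap.mk₂_apply, map_zero, LinearMap.zero_apply] at this
      linarith
    have h12 : v.1.2 = v.2.1 := by
      rw [← sub_eq_zero]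
      apply hω₁.nondeg
      intro w
      have := h ((0, w), (w, 0)) rfl
      simp only [form0112, LinearMap.mk₂_apply, map_zero, LinearMap.zero_apply,
        map_sub, LinearMap.sub_apply] at this ⊢
      linarith
    exact ⟨h12, Prod.ext h0 h3⟩
  · rintro ⟨hK, hker⟩ w hw
    have h0 : v.1.1 = 0 := congrArg Prod.fst hker
    have h3 : v.2.2 = 0 := congrArg Prod.snd hker
    have hw' : w.1.2 = w.2.1 := hw
    show - ω₀ v.1.1 w.1.1 + ω₁ v.1.2 w.1.2 - ω₁ v.2.1 w.2.1 + ω₂ v.2.2 w.2.2 = 0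
    rw [h0, h3, hK, hw']
    simp

end Aux2

theorem statement3 {V₀ V₁ V₂ : Type*}
    [AddCommGroup V₀] [Module ℝ V₀] [FiniteDimensional ℝ V₀]
    [AddCommGroup V₁] [Module ℝ V₁] [FiniteDimensional ℝ V₁]
    [AddCommGroup V₂] [Module ℝ V₂] [FiniteDimensional ℝ V₂]
    (ω₀ : V₀ →ₗ[ℝ] V₀ →ₗ[ℝ] ℝ) (ω₁ : V₁ →ₗ[ℝ] V₁ →ₗ[ℝ] ℝ) (ω₂ : V₂ →ₗ[ℝ] V₂ →ₗ[ℝ] ℝ)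
    (hω₀ : IsSymplecticForm ω₀) (hω₁ : IsSymplecticForm ω₁) (hω₂ : IsSymplecticForm ω₂)
    (Λ₀₁ : Submodule ℝ (V₀ × V₁)) (Λ₁₂ : Submodule ℝ (V₁ × V₂))
    (hΛ₀₁ : IsLagrangian (prodFormNegPos ω₀ ω₁) Λ₀₁)
    (hΛ₁₂ : IsLagrangian (prodFormNegPos ω₁ ω₂) Λ₁₂) :
    Module.finrank ℝ ↥((Λ₀₁.prod Λ₁₂ ⊓ Kdiag) ⊓ LinearMap.ker proj02)
      = Module.finrank ℝ ((V₀ × V₁) × (V₁ × V₂))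
          - Module.finrank ℝ ↥(Λ₀₁.prod Λ₁₂ ⊔ Kdiag) := by
  have hform := isSymplectic_form0112 hω₀ hω₁ hω₂
  have hL := lagrangian_prod hΛ₀₁ hΛ₁₂
  have hK := symplComp_Kdiag hω₀ hω₁ hω₂ (V₀ := V₀) (V₁ := V₁) (V₂ := V₂)
  have hsub : (Λ₀₁.prod Λ₁₂ ⊓ Kdiag) ⊓ LinearMap.ker proj02
      = symplComp (form0112 ω₀ ω₁ ω₂) (Λ₀₁.prod Λ₁₂ ⊔ Kdiag) := by
    rw [symplComp_sup, hL, hK, inf_assoc]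
  rw [hsub]
  have := finrank_symplComp (form0112 ω₀ ω₁ ω₂) hform (Λ₀₁.prod Λ₁₂ ⊔ Kdiag)
  omega
end

section
/- Let (V₀, ω₀), (V₁, ω₁), (V₂, ω₂) be symplectic vector spaces and let Λ ⊆ V₀ × V₁ × V₁ × V₂ be a Lagrangian subspace for ω₀₁₁₂ satisfying Λ + K = V₀ × V₁ × V₁ × V₂. Then dim(Λ ∩ K) = (dim V₀ + dim V₂)/2, and for every subspace U ⊆ Λ with Λ = (Λ ∩ K) ⊕ U there exist unique linear maps j₀ : V₁ → V₀, j₁ : V₁ → V₁, j₂ : V₁ → V₂ such that U = {(j₀(w), w + j₁(w), −w + j₁(w), j₂(w)) : w ∈ V₁}. -/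
open LinearMap Submodule

section Aux

lemma IsSymplecticForm.skew {V : Type*} [AddCommGroup V] [Module ℝ V]
    {ω : V →ₗ[ℝ] V →ₗ[ℝ] ℝ} (hω : IsSymplecticForm ω) (v w : V) :
    ω v w = - ω w v := by
  have h := hω.alternating (v + w)
  simp only [map_add, LinearMap.add_apply, hω.alternating] at h
  linarith

end Aux

theorem statement9 {V₀ V₁ V₂ : Type*}
    [AddCommGroup V₀] [Module ℝ V₀] [FiniteDimensional ℝ V₀]
    [AddCommGroup V₁] [Module ℝ V₁] [FiniteDimensional ℝ V₁]
    [AddCommGroup V₂] [Module ℝ V₂] [FiniteDimensional ℝ V₂]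
    (ω₀ : V₀ →ₗ[ℝ] V₀ →ₗ[ℝ] ℝ) (ω₁ : V₁ →ₗ[ℝ] V₁ →ₗ[ℝ] ℝ) (ω₂ : V₂ →ₗ[ℝ] V₂ →ₗ[ℝ] ℝ)
    (hω₀ : IsSymplecticForm ω₀) (hω₁ : IsSymplecticForm ω₁) (hω₂ : IsSymplecticForm ω₂)
    (Λ : Submodule ℝ ((V₀ × V₁) × (V₁ × V₂)))
    (hΛ : IsLagrangian (form0112 ω₀ ω₁ ω₂) Λ)
    (htrans : Λ ⊔ Kdiag = ⊤) :
    2 * Module.finrank ℝ ↥(Λ ⊓ Kdiag) = Module.finrank ℝ V₀ + Module.finrank ℝ V₂ ∧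
    ∀ U : Submodule ℝ ((V₀ × V₁) × (V₁ × V₂)),
      U ≤ Λ → (Λ ⊓ Kdiag) ⊓ U = ⊥ → (Λ ⊓ Kdiag) ⊔ U = Λ →
      ∃! j : (V₁ →ₗ[ℝ] V₀) × (V₁ →ₗ[ℝ] V₁) × (V₁ →ₗ[ℝ] V₂),
        (↑U : Set ((V₀ × V₁) × (V₁ × V₂)))
          = {x | ∃ w : V₁, x = ((j.1 w, w + j.2.1 w), (-w + j.2.1 w, j.2.2 w))} := by
  set B := form0112 ω₀ ω₁ ω₂ with hBdef
  have hBapp : ∀ x y : (V₀ × V₁) × (V₁ × V₂),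
      B x y = - ω₀ x.1.1 y.1.1 + ω₁ x.1.2 y.1.2 - ω₁ x.2.1 y.2.1 + ω₂ x.2.2 y.2.2 :=
    fun x y => rfl
  -- B is alternating
  have halt : ∀ x, B x x = 0 := by
    intro x
    rw [hBapp, hω₀.alternating, hω₁.alternating, hω₁.alternating, hω₂.alternating]
    ring
  have hskew : ∀ x y, B x y = - B y x := by
    intro x y
    have h := halt (x + y)
    rw [hBapp] at h
    simp only [Prod.fst_add, Prod.snd_add, map_add, LinearMap.add_apply,
      hω₀.alternating, hω₁.alternating, hω₂.alternating] at h
    rw [hBapp, hBapp]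
    linarith
  have hrefl : B.IsRefl := by
    intro x y h
    rw [hskew, h, neg_zero]
  -- B is nondegenerate
  have hnd : LinearMap.BilinForm.Nondegenerate B := by
    rw [LinearMap.BilinForm.Nondegenerate, hrefl.nondegenerate_iff_separatingLeft]
    intro x hx
    have h0 : x.1.1 = 0 := by
      apply hω₀.nondeg
      intro a
      have := hx ((a, 0), (0, 0))
      rw [hBapp] at this
      simp only [map_zero, LinearMap.zero_apply] at this
      linarith
    have h1 : x.1.2 = 0 := by
      apply hω₁.nondeg
      intro a
      have := hx ((0, a), (0, 0))
      rw [hBapp] at this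
      simp only [map_zero, LinearMap.zero_apply] at this
      linarith
    have h2 : x.2.1 = 0 := by
      apply hω₁.nondeg
      intro a
      have := hx ((0, 0), (a, 0))
      rw [hBapp] at this
      simp only [map_zero, LinearMap.zero_apply] at this
      linarith
    have h3 : x.2.2 = 0 := by
      apply hω₂.nondeg
      intro a
      have := hx ((0, 0), (0, a))
      rw [hBapp] at this
      simp only [map_zero, LinearMap.zero_apply] at this
      linarith
    exact Prod.ext (Prod.ext h0 h1) (Prod.ext h2 h3)
  -- symplComp = B.orthogonal
  have hcomp : symplComp B Λ = LinearMap.BilinForm.orthogonal B Λ := by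
    ext x
    constructor
    · intro hx y hy
      exact hrefl x y (hx y hy)
    · intro hx y hy
      exact hrefl y x (hx y hy)
  -- dimension of Λ
  have hΛdim : 2 * Module.finrank ℝ ↥Λ = Module.finrank ℝ ((V₀ × V₁) × (V₁ × V₂)) := by
    have h1 : Module.finrank ℝ ↥(LinearMap.BilinForm.orthogonal B Λ) =
        Module.finrank ℝ ((V₀ × V₁) × (V₁ × V₂)) - Module.finrank ℝ ↥Λ :=
      LinearMap.BilinForm.finrank_orthogonal hnd Λ
    have h2 : Λ = LinearMap.BilinForm.orthogonal B Λ := hΛ.trans hcomp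
    have h3 : Module.finrank ℝ ↥Λ ≤ Module.finrank ℝ ((V₀ × V₁) × (V₁ × V₂)) :=
      Submodule.finrank_le Λ
    rw [← h2] at h1
    omega
  -- dimension of Kdiag
  have hKequiv : (V₀ × V₁ × V₂) ≃ₗ[ℝ]
      (Kdiag : Submodule ℝ ((V₀ × V₁) × (V₁ × V₂))) :=
    { toFun := fun x => ⟨((x.1, x.2.1), (x.2.1, x.2.2)), rfl⟩
      map_add' := fun x y => rfl
      map_smul' := fun c x => rfl
      invFun := fun x => (x.1.1.1, x.1.1.2, x.1.2.2)
      left_inv := fun x => rfl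
      right_inv := fun x => by
        obtain ⟨⟨⟨a, b⟩, c, dd⟩, hx⟩ := x
        have hbc : b = c := hx
        subst hbc
        rfl }
  have hKdim : Module.finrank ℝ ↥(Kdiag : Submodule ℝ ((V₀ × V₁) × (V₁ × V₂)))
      = Module.finrank ℝ V₀ + Module.finrank ℝ V₁ + Module.finrank ℝ V₂ := by
    rw [← LinearEquiv.finrank_eq hKequiv, Module.finrank_prod, Module.finrank_prod]
    ring
  have htop : Module.finrank ℝ ((V₀ × V₁) × (V₁ × V₂)) =
      Module.finrank ℝ V₀ + Module.finrank ℝ V₁ + Module.finrank ℝ V₁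
        + Module.finrank ℝ V₂ := by
    rw [Module.finrank_prod, Module.finrank_prod, Module.finrank_prod]
    ring
  have hdimsum : Module.finrank ℝ ↥(Λ ⊔ (Kdiag : Submodule ℝ ((V₀ × V₁) × (V₁ × V₂))))
        + Module.finrank ℝ ↥(Λ ⊓ Kdiag)
      = Module.finrank ℝ ↥Λ + Module.finrank ℝ ↥(Kdiag : Submodule ℝ ((V₀ × V₁) × (V₁ × V₂))) :=
    Submodule.finrank_sup_add_finrank_inf_eq Λ Kdiag
  rw [htrans, finrank_top] at hdimsum
  constructor
  · omega
  -- Part 2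
  intro U hUle hUdisj hUsup
  -- the map d : U → V₁
  have hKsup : U ⊔ (Kdiag : Submodule ℝ ((V₀ × V₁) × (V₁ × V₂))) = ⊤ := by
    apply eq_top_iff.mpr
    rw [← htrans]
    apply sup_le
    · rw [← hUsup]
      apply sup_le
      · exact le_trans inf_le_right le_sup_right
      · exact le_sup_left
    · exact le_sup_right
  set d : ↥U →ₗ[ℝ] V₁ :=
    { toFun := fun x => (2⁻¹ : ℝ) • ((x : (V₀ × V₁) × (V₁ × V₂)).1.2 - (x : (V₀ × V₁) × (V₁ × V₂)).2.1)
      map_add' := by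
        intro x y
        simp only [Submodule.coe_add, Prod.fst_add, Prod.snd_add]
        rw [← smul_add]
        congr 1
        abel
      map_smul' := by
        intro c x
        simp only [Submodule.coe_smul, Prod.smul_fst, Prod.smul_snd, RingHom.id_apply]
        rw [← smul_sub, smul_comm] } with hddef
  have hdinj : Function.Injective d := by
    rw [← LinearMap.ker_eq_bot]
    apply (Submodule.eq_bot_iff _).mpr
    rintro x hx
    have hx' : (2⁻¹ : ℝ) • ((x : (V₀ × V₁) × (V₁ × V₂)).1.2 - (x : (V₀ × V₁) × (V₁ × V₂)).2.1) = 0 := hx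
    have h12 : (x : (V₀ × V₁) × (V₁ × V₂)).1.2 = (x : (V₀ × V₁) × (V₁ × V₂)).2.1 := by
      have := smul_eq_zero.mp hx'
      rcases this with h | h
      · norm_num at h
      · exact sub_eq_zero.mp h
    have hmem : (x : (V₀ × V₁) × (V₁ × V₂)) ∈ (Λ ⊓ Kdiag) ⊓ U := by
      refine ⟨⟨hUle x.2, h12⟩, x.2⟩
    rw [hUdisj] at hmem
    exact Subtype.ext hmem
  have hdsurj : Function.Surjective d := by
    intro w
    have hp : (((0 : V₀), w), (-w, (0 : V₂))) ∈ U ⊔ (Kdiag : Submodule ℝ ((V₀ × V₁) × (V₁ × V₂))) := by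
      rw [hKsup]; trivial
    rcases Submodule.mem_sup.mp hp with ⟨u, hu, k, hk, huk⟩
    refine ⟨⟨u, hu⟩, ?_⟩
    have hu12 : u.1.2 = w - k.1.2 := by
      have := congrArg (fun z : (V₀ × V₁) × (V₁ × V₂) => z.1.2) huk
      simp only [Prod.fst_add, Prod.snd_add] at this
      linear_combination (norm := module) this
    have hu21 : u.2.1 = -w - k.2.1 := by
      have := congrArg (fun z : (V₀ × V₁) × (V₁ × V₂) => z.2.1) huk
      simp only [Prod.fst_add, Prod.snd_add] at this
      linear_combination (norm := module) this
    have hkd : k.1.2 = k.2.1 := hk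
    show (2⁻¹ : ℝ) • (u.1.2 - u.2.1) = w
    rw [hu12, hu21, hkd]
    match_scalars <;> norm_num
  set e : ↥U ≃ₗ[ℝ] V₁ := LinearEquiv.ofBijective d ⟨hdinj, hdsurj⟩ with hedef
  set g : V₁ →ₗ[ℝ] (V₀ × V₁) × (V₁ × V₂) := U.subtype ∘ₗ (e.symm : V₁ →ₗ[ℝ] ↥U) with hgdef
  have hgmem : ∀ w, g w ∈ U := fun w => (e.symm w).2
  have hgd : ∀ w : V₁, (2⁻¹ : ℝ) • ((g w).1.2 - (g w).2.1) = w := by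
    intro w
    have : d (e.symm w) = w := e.apply_symm_apply w
    exact this
  have hge : ∀ x : ↥U, g (d x) = (x : (V₀ × V₁) × (V₁ × V₂)) := by
    intro x
    have : e.symm (d x) = x := e.symm_apply_apply x
    simp only [hgdef, LinearMap.comp_apply]
    rw [show ((e.symm : V₁ →ₗ[ℝ] ↥U) (d x)) = e.symm (d x) from rfl, this]
    rfl
  set j₀ : V₁ →ₗ[ℝ] V₀ := (LinearMap.fst ℝ V₀ V₁) ∘ₗ (LinearMap.fst ℝ (V₀ × V₁) (V₁ × V₂)) ∘ₗ g with hj0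
  set j₁ : V₁ →ₗ[ℝ] V₁ := (2⁻¹ : ℝ) •
    ((LinearMap.snd ℝ V₀ V₁) ∘ₗ (LinearMap.fst ℝ (V₀ × V₁) (V₁ × V₂)) ∘ₗ g
      + (LinearMap.fst ℝ V₁ V₂) ∘ₗ (LinearMap.snd ℝ (V₀ × V₁) (V₁ × V₂)) ∘ₗ g) with hj1
  set j₂ : V₁ →ₗ[ℝ] V₂ := (LinearMap.snd ℝ V₁ V₂) ∘ₗ (LinearMap.snd ℝ (V₀ × V₁) (V₁ × V₂)) ∘ₗ g with hj2
  have hj0app : ∀ w, j₀ w = (g w).1.1 := fun w => rfl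
  have hj1app : ∀ w, j₁ w = (2⁻¹ : ℝ) • ((g w).1.2 + (g w).2.1) := fun w => rfl
  have hj2app : ∀ w, j₂ w = (g w).2.2 := fun w => rfl
  have hgform : ∀ w : V₁, g w = ((j₀ w, w + j₁ w), (-w + j₁ w, j₂ w)) := by
    intro w
    have hd := hgd w
    refine Prod.ext (Prod.ext rfl ?_) (Prod.ext ?_ rfl)
    · show (g w).1.2 = w + j₁ w
      rw [hj1app]
      linear_combination (norm := module) hd
    · show (g w).2.1 = -w + j₁ w
      rw [hj1app]
      linear_combination (norm := module) (-1 : ℝ) • hd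
  refine ⟨(j₀, j₁, j₂), ?_, ?_⟩
  · -- the set equality
    ext x
    simp only [SetLike.mem_coe, Set.mem_setOf_eq]
    constructor
    · intro hx
      refine ⟨d ⟨x, hx⟩, ?_⟩
      rw [← hgform, hge]
    · rintro ⟨w, rfl⟩
      rw [← hgform]
      exact hgmem w
  · -- uniqueness
    rintro ⟨j₀', j₁', j₂'⟩ hj'
    have key : ∀ w : V₁, ((j₀' w, w + j₁' w), (-w + j₁' w, j₂' w)) = g w := by
      intro w
      have hmem : ((j₀' w, w + j₁' w), (-w + j₁' w, j₂' w)) ∈ U := by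
        rw [← SetLike.mem_coe, hj']
        exact ⟨w, rfl⟩
      have := hge ⟨_, hmem⟩
      have hdval : d ⟨((j₀' w, w + j₁' w), (-w + j₁' w, j₂' w)), hmem⟩ = w := by
        show (2⁻¹ : ℝ) • ((w + j₁' w) - (-w + j₁' w)) = w
        match_scalars <;> norm_num
      rw [hdval] at this
      exact this.symm
    have key' : ∀ w : V₁, ((j₀' w, w + j₁' w), (-w + j₁' w, j₂' w))
        = ((j₀ w, w + j₁ w), (-w + j₁ w, j₂ w)) := by
      intro w
      rw [key w, hgform w]
    refine Prod.ext ?_ (Prod.ext ?_ ?_)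
    · ext w
      exact congrArg (fun z : (V₀ × V₁) × (V₁ × V₂) => z.1.1) (key' w)
    · ext w
      have := congrArg (fun z : (V₀ × V₁) × (V₁ × V₂) => z.1.2) (key' w)
      simp only at this
      exact add_left_cancel this
    · ext w
      exact congrArg (fun z : (V₀ × V₁) × (V₁ × V₂) => z.2.2) (key' w)
end
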